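/- Let G and H be permutation groups on sets X and Y respectively, let A ⊆ G and B ⊆ H be generating subsets each closed under inversion, and let ψ : X → Y be a map such that {ψ ∘ a : a ∈ A} = {b ∘ ψ : b ∈ B}. Then: G acts on the quotient set X/ψ := {ψ⁻¹(y) : y ∈ im ψ} of nonempty fibers of ψ; im ψ is an H-invariant subset of Y; and ψ, viewed as a bijection from X/ψ to im ψ, induces a group isomorphism from the permutation group induced by G on X/ψ to the restriction of H to im ψ. -/

import Mathlib

theorem stmt5_key1 {X Y : Type*} (G : Subgroup (Equiv.Perm X)) (H : Subgroup (Equiv.Perm Y))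
    (A : Set (Equiv.Perm X)) (B : Set (Equiv.Perm Y))
    (hGA : Subgroup.closure A = G) (hHB : Subgroup.closure B = H)
    (ψ : X → Y)
    (hψ : (fun a : Equiv.Perm X => ψ ∘ ⇑a) '' A = (fun b : Equiv.Perm Y => ⇑b ∘ ψ) '' B) :
    ∀ g ∈ G, ∃ h ∈ H, ∀ x, ψ (g x) = h (ψ x) := by
  intro g hg
  rw [← hGA] at hg
  induction hg using Subgroup.closure_induction with
  | mem a ha =>
    have : (fun a : Equiv.Perm X => ψ ∘ ⇑a) a ∈ (fun b : Equiv.Perm Y => ⇑b ∘ ψ) '' B := by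
      rw [← hψ]; exact ⟨a, ha, rfl⟩
    obtain ⟨b, hb, heq⟩ := this
    exact ⟨b, hHB ▸ Subgroup.subset_closure hb, fun x => congrFun heq.symm x⟩
  | one => exact ⟨1, H.one_mem, fun x => rfl⟩
  | mul g₁ g₂ _ _ ih₁ ih₂ =>
    obtain ⟨h₁, hh₁, e₁⟩ := ih₁
    obtain ⟨h₂, hh₂, e₂⟩ := ih₂
    exact ⟨h₁ * h₂, H.mul_mem hh₁ hh₂, fun x => by
      simp only [Equiv.Perm.mul_apply]; rw [e₁, e₂]⟩
  | inv g _ ih =>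
    obtain ⟨h, hh, e⟩ := ih
    refine ⟨h⁻¹, H.inv_mem hh, fun x => ?_⟩
    have := e (g⁻¹ x)
    simp only [← Equiv.Perm.mul_apply, mul_inv_cancel, Equiv.Perm.one_apply] at this
    rw [this]
    simp

theorem stmt5 {X Y : Type*} (G : Subgroup (Equiv.Perm X)) (H : Subgroup (Equiv.Perm Y))
    (A : Set (Equiv.Perm X)) (B : Set (Equiv.Perm Y))
    (hGA : Subgroup.closure A = G) (hHB : Subgroup.closure B = H)
    (hAinv : ∀ a ∈ A, a⁻¹ ∈ A) (hBinv : ∀ b ∈ B, b⁻¹ ∈ B)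
    (ψ : X → Y)
    (hψ : (fun a : Equiv.Perm X => ψ ∘ ⇑a) '' A = (fun b : Equiv.Perm Y => ⇑b ∘ ψ) '' B) :
    -- `G` acts on the quotient set of fibers of `ψ`
    (∀ g ∈ G, ∀ x x' : X, ψ x = ψ x' ↔ ψ (g x) = ψ (g x')) ∧
    -- `im ψ` is `H`-invariant
    (∀ h ∈ H, ∀ y ∈ Set.range ψ, h y ∈ Set.range ψ) ∧
    -- `ψ` intertwines `G` on `X/ψ` with `H` on `im ψ`, in both directions:
    (∀ g ∈ G, ∃ h ∈ H, ∀ x, ψ (g x) = h (ψ x)) ∧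
    (∀ h ∈ H, ∃ g ∈ G, ∀ x, ψ (g x) = h (ψ x)) := by
  have key1 := stmt5_key1 G H A B hGA hHB ψ hψ
  have key2 : ∀ h ∈ H, ∃ g ∈ G, ∀ x, ψ (g x) = h (ψ x) := by
    intro h hh
    rw [← hHB] at hh
    induction hh using Subgroup.closure_induction with
    | mem b hb =>
      have : (fun b : Equiv.Perm Y => ⇑b ∘ ψ) b ∈ (fun a : Equiv.Perm X => ψ ∘ ⇑a) '' A := by
        rw [hψ]; exact ⟨b, hb, rfl⟩
      obtain ⟨a, ha, heq⟩ := this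
      exact ⟨a, hGA ▸ Subgroup.subset_closure ha, fun x => congrFun heq x⟩
    | one => exact ⟨1, G.one_mem, fun x => rfl⟩
    | mul h₁ h₂ _ _ ih₁ ih₂ =>
      obtain ⟨g₁, hg₁, e₁⟩ := ih₁
      obtain ⟨g₂, hg₂, e₂⟩ := ih₂
      exact ⟨g₁ * g₂, G.mul_mem hg₁ hg₂, fun x => by
        simp only [Equiv.Perm.mul_apply]; rw [e₁, e₂]⟩
    | inv h _ ih =>
      obtain ⟨g, hg, e⟩ := ih
      refine ⟨g⁻¹, G.inv_mem hg, fun x => ?_⟩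
      have := e (g⁻¹ x)
      simp only [← Equiv.Perm.mul_apply, mul_inv_cancel, Equiv.Perm.one_apply] at this
      rw [this]
      simp
  refine ⟨?_, ?_, key1, key2⟩
  · intro g hg x x'
    obtain ⟨h, _, e⟩ := key1 g hg
    rw [e, e]
    exact ⟨fun p => by rw [p], fun p => h.injective p⟩
  · intro h hh y hy
    obtain ⟨x, rfl⟩ := hy
    obtain ⟨g, _, e⟩ := key2 h hh
    exact ⟨g x, (e x)⟩
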